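/- For every positive integer m and every even positive integer k, S^{(m)}((2m)^k) is an even integer. -/

import Mathlib

def S (m x : ℕ) : ℤ :=
  ∑ n ∈ Finset.range x, if (2 * m + 1) ∣ n then (-1 : ℤ) ^ ((Nat.digits (2 * m) n).sum) else 0

lemma card_mult (d N : ℕ) (hd : 0 < d) (hN : 0 < N) :
    ({n ∈ Finset.range N | d ∣ n}).card = (N - 1) / d + 1 := by
  have h : Finset.range N = insert 0 (Finset.Ioc 0 (N - 1)) := by
    ext x; simp [Finset.mem_Ioc]; omega
  rw [h, Finset.filter_insert, if_pos (dvd_zero d),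
    Finset.card_insert_of_notMem (by simp), Nat.Ioc_filter_dvd_card_eq_div]

theorem S_even_value (m : ℕ) (hm : 0 < m) (k : ℕ) (hk : 0 < k) (hke : Even k) :
    Even (S m ((2 * m) ^ k)) := by
  set N := (2 * m) ^ k with hNdef
  set d := 2 * m + 1 with hddef
  have hNpos : 0 < N := Nat.pow_pos (by omega)
  -- reduce to parity of the count
  have hcast : ((S m N : ℤ) : ZMod 2) = (({n ∈ Finset.range N | d ∣ n}).card : ZMod 2) := by
    rw [S]
    push_cast
    rw [← Finset.sum_boole]
    apply Finset.sum_congr rfl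
    intro n _
    have : ((-1 : ZMod 2)) = 1 := by decide
    split <;> simp [this]
  -- d divides N - 1
  obtain ⟨j, rfl⟩ := hke
  obtain ⟨n, rfl⟩ : ∃ n, m = n + 1 := ⟨m - 1, by omega⟩
  have hdvd : d ∣ N - 1 := by
    have h1 : (2 * (n + 1)) ^ 2 = d * (2 * n + 1) + 1 := by rw [hddef]; ring
    have h2 : N = ((2 * (n + 1)) ^ 2) ^ j := by
      rw [hNdef, ← pow_mul]; congr 1; omega
    have hN1 : 1 ≤ N := hNpos
    have : N % d = 1 % d := by
      rw [h2, Nat.pow_mod, h1, Nat.mul_add_mod]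
      rw [Nat.mod_eq_of_lt (show 1 < d by omega)]
      simp; exact Nat.mod_eq_of_lt (by omega)
    have hd1 : 1 % d = 1 := Nat.mod_eq_of_lt (by omega)
    rw [hd1] at this
    exact (Nat.modEq_iff_dvd' hN1).mp (by simpa [Nat.ModEq, hd1] using this.symm)
  set q := (N - 1) / d with hq
  have hNq : N - 1 = d * q := by rw [hq, Nat.mul_div_cancel' hdvd]
  -- N is even
  have hNeven : Even N := by
    rw [hNdef, Nat.even_pow]
    exact ⟨⟨n + 1, by ring⟩, by omega⟩
  obtain ⟨t, ht⟩ := hNeven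
  have hqodd : Odd q := by
    have hodd : Odd (d * q) := ⟨t - 1, by omega⟩
    exact (Nat.odd_mul.mp hodd).2
  obtain ⟨r, hr⟩ := hqodd
  have hcard : ({n ∈ Finset.range N | d ∣ n}).card = q + 1 := card_mult d N (by omega) hNpos
  have hz : ((S (n + 1) N : ℤ) : ZMod 2) = 0 := by
    rw [hcast, hcard, ZMod.natCast_eq_zero_iff]
    omega
  have h2 : (2 : ℤ) ∣ S (n + 1) N := by
    have := (ZMod.intCast_zmod_eq_zero_iff_dvd (S (n + 1) N) 2).mp hz
    exact_mod_cast this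
  obtain ⟨c, hc⟩ := h2
  exact ⟨c, by omega⟩
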